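/- In the Fock model notation with raising operators ω(R₁) = 8π∂_{𝔳̄}∂_{𝔴̄} - (1/8π)𝔳𝔴 and ω(R₂) = 8π∂_𝔳∂_{𝔴̄} - (1/8π)𝔳̄𝔴 acting on ℂ[𝔳,𝔳̄,𝔴,𝔴̄], one has for all r ≥ 0: (-4π)^{-r} Q_r(R₁,R₂)(𝔴) = (-8π)^{-2r} 2^r 𝔴^{r+1} Q_r(𝔳,𝔳̄), where Q_r(X,Y) = ∑_{s=0}^r (r choose s)² X^{r-s}(-Y)^s. -/

import Mathlib

open MvPolynomial

/-- `Q_r(𝔳,𝔳̄) = ∑_{s=0}^r C(r,s)² 𝔳^{r-s}(-𝔳̄)^s` in the Fock polynomial model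
`ℂ[𝔷]` with variables `0 ↦ 𝔳`, `1 ↦ 𝔳̄`, `2 ↦ 𝔴`, `3 ↦ 𝔴̄`. -/
noncomputable def QmvC (r : ℕ) : MvPolynomial (Fin 4) ℂ :=
  ∑ s ∈ Finset.range (r + 1), C ((r.choose s : ℂ) ^ 2) * (X 0) ^ (r - s) * (-X 1) ^ s

/-- The raising operator `ω(R₁) = 8π ∂_𝔳̄∂_𝔴̄ - (1/8π)𝔳𝔴` as a `ℂ`-linear endomorphism. -/
noncomputable def R1op : Module.End ℂ (MvPolynomial (Fin 4) ℂ) :=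
  (8 * (Real.pi : ℂ)) • ((pderiv (1 : Fin 4) : Derivation ℂ (MvPolynomial (Fin 4) ℂ) _).toLinearMap ∘ₗ (pderiv (3 : Fin 4) : Derivation ℂ (MvPolynomial (Fin 4) ℂ) _).toLinearMap)
    - (1 / (8 * (Real.pi : ℂ))) • LinearMap.mulLeft ℂ (X 0 * X 2)

/-- The raising operator `ω(R₂) = 8π ∂_𝔳∂_𝔴̄ - (1/8π)𝔳̄𝔴` as a `ℂ`-linear endomorphism. -/
noncomputable def R2op : Module.End ℂ (MvPolynomial (Fin 4) ℂ) :=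
  (8 * (Real.pi : ℂ)) • ((pderiv (0 : Fin 4) : Derivation ℂ (MvPolynomial (Fin 4) ℂ) _).toLinearMap ∘ₗ (pderiv (3 : Fin 4) : Derivation ℂ (MvPolynomial (Fin 4) ℂ) _).toLinearMap)
    - (1 / (8 * (Real.pi : ℂ))) • LinearMap.mulLeft ℂ (X 1 * X 2)

lemma pd3 (a b k : ℕ) :
    (pderiv (3:Fin 4)) ((X 0:MvPolynomial (Fin 4) ℂ) ^ a * X 1 ^ b * X 2 ^ k) = 0 := by
  simp [pderiv_X_of_ne (show (0:Fin 4) ≠ 3 by decide),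
    pderiv_X_of_ne (show (1:Fin 4) ≠ 3 by decide),
    pderiv_X_of_ne (show (2:Fin 4) ≠ 3 by decide)]

lemma R1_mono (a b k : ℕ) :
    R1op ((X 0:MvPolynomial (Fin 4) ℂ) ^ a * X 1 ^ b * X 2 ^ k) =
      (-(1 / (8 * (Real.pi:ℂ)))) • (X 0 ^ (a+1) * X 1 ^ b * X 2 ^ (k+1)) := by
  simp only [R1op, LinearMap.sub_apply, LinearMap.smul_apply, LinearMap.comp_apply,
    Derivation.coeFn_coe, LinearMap.mulLeft_apply, pd3, map_zero, smul_zero, zero_sub,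
    neg_smul]
  congr 1
  ring

lemma R2_mono (a b k : ℕ) :
    R2op ((X 0:MvPolynomial (Fin 4) ℂ) ^ a * X 1 ^ b * X 2 ^ k) =
      (-(1 / (8 * (Real.pi:ℂ)))) • (X 0 ^ a * X 1 ^ (b+1) * X 2 ^ (k+1)) := by
  simp only [R2op, LinearMap.sub_apply, LinearMap.smul_apply, LinearMap.comp_apply,
    Derivation.coeFn_coe, LinearMap.mulLeft_apply, pd3, map_zero, smul_zero, zero_sub,
    neg_smul]
  congr 1
  ring

lemma R2_pow (b : ℕ) :
    (R2op ^ b) (X 2) =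
      ((-(1 / (8 * (Real.pi:ℂ)))) ^ b) • ((X 0:MvPolynomial (Fin 4) ℂ) ^ 0 * X 1 ^ b * X 2 ^ (b+1)) := by
  induction b with
  | zero => simp
  | succ n ih =>
    rw [pow_succ', Module.End.mul_apply, ih, map_smul, R2_mono, smul_smul,
      ← pow_succ (-(1 / (8 * (Real.pi:ℂ)))) n]

lemma R12_pow (a b : ℕ) :
    ((R1op ^ a) * (R2op ^ b)) (X 2) =
      ((-(1 / (8 * (Real.pi:ℂ)))) ^ (a + b)) • ((X 0:MvPolynomial (Fin 4) ℂ) ^ a * X 1 ^ b * X 2 ^ (a+b+1)) := by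
  rw [Module.End.mul_apply, R2_pow, map_smul]
  induction a with
  | zero => simp
  | succ n ih =>
    rw [pow_succ', Module.End.mul_apply, ← map_smul, ih, map_smul, R1_mono, smul_smul,
      show n + 1 + b = n + b + 1 from by omega,
      pow_succ (-(1 / (8 * (Real.pi:ℂ)))) (n + b)]

/-- `(-4π)^{-r} Q_r(R₁,R₂)(𝔴) = (-8π)^{-2r} 2^r 𝔴^{r+1} Q_r(𝔳,𝔳̄)`. -/
theorem stmt_12 (r : ℕ) :
    ((-4 * (Real.pi : ℂ)) ^ r)⁻¹ •
        ((∑ s ∈ Finset.range (r + 1),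
            ((r.choose s : ℂ) ^ 2 * (-1) ^ s) • (R1op ^ (r - s) * R2op ^ s)) (X 2))
      = ((((-8 * (Real.pi : ℂ)) ^ (2 * r))⁻¹ * 2 ^ r) • ((X 2) ^ (r + 1) * QmvC r)) := by
  have hpi : (Real.pi : ℂ) ≠ 0 := by
    exact_mod_cast Complex.ofReal_ne_zero.mpr Real.pi_ne_zero
  rw [LinearMap.sum_apply, Finset.smul_sum, QmvC, Finset.mul_sum, Finset.smul_sum]
  refine Finset.sum_congr rfl fun s hs => ?_
  have hs' : s ≤ r := Nat.lt_succ_iff.mp (Finset.mem_range.mp hs)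
  rw [LinearMap.smul_apply, R12_pow, Nat.sub_add_cancel hs']
  have hX : (C ((r.choose s : ℂ)^2) * X 0 ^ (r-s) * (-X 1)^s : MvPolynomial (Fin 4) ℂ)
      = ((r.choose s : ℂ)^2 * (-1)^s) • (X 0 ^ (r-s) * X 1 ^ s) := by
    rw [smul_eq_C_mul, map_mul, map_pow, map_pow, map_neg, map_one]
    ring
  rw [hX, mul_smul_comm, smul_smul, smul_smul, smul_smul,
    show ((X 2:MvPolynomial (Fin 4) ℂ) ^ (r+1) * (X 0 ^ (r-s) * X 1 ^ s))
      = X 0 ^ (r-s) * X 1 ^ s * X 2 ^ (r+1) by ring]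
  congr 1
  have h2 : ((2:ℂ) ^ r) ≠ 0 := pow_ne_zero _ two_ne_zero
  have e1 : (-(1 / (8 * (Real.pi:ℂ)))) = ((-8 * Real.pi:ℂ))⁻¹ := by
    rw [div_eq_inv_mul, mul_one, ← inv_neg]
    norm_num
  have L : ((-4 * (Real.pi:ℂ)) ^ r)⁻¹ * (-(1 / (8 * (Real.pi:ℂ)))) ^ r
      = (((32:ℂ) * Real.pi ^ 2) ^ r)⁻¹ := by
    rw [e1, inv_pow, ← mul_inv, ← mul_pow]
    congr 2
    ring
  have e3 : ((-8 * (Real.pi:ℂ)) ^ (2 * r)) = 2 ^ r * (32 * Real.pi ^ 2) ^ r := by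
    rw [pow_mul, ← mul_pow]
    congr 1
    ring
  have Rh : (((-8 * (Real.pi:ℂ)) ^ (2 * r))⁻¹ * 2 ^ r)
      = (((32:ℂ) * Real.pi ^ 2) ^ r)⁻¹ := by
    rw [e3, mul_inv, mul_comm, ← mul_assoc, mul_inv_cancel₀ h2, one_mul]
  rw [mul_right_comm, L, Rh]
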